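/- For a real number $q$ with $q > 0$ and $q \ne 1$, and for all positive integers $n$, $r$, $p$, $\sum_{\ell=1}^{n} q^{\ell-1} ([\ell]_q)^{p} H_{\ell}^{(r)}(q) = A_q(p,r,n) H_n^{(r)}(q) - B_q(p,r,n)$, where $A_q(p,r,n) = \sum_{\ell=0}^{p} q^{\binom{\ell}{2}+\ell-1} S_q(p,\ell)\, [\ell]_q!\, \binom{n+r-1}{r-1}_q^{-1} \binom{r+\ell-1}{\ell}_q \binom{r+n}{r+\ell}_q$ and $B_q(p,r,n) = \sum_{\ell=0}^{p} \frac{q^{\binom{\ell}{2}+r+2\ell-2}}{[r+\ell]_q} S_q(p,\ell)\, [\ell]_q!\, \binom{r+\ell-1}{\ell}_q \binom{r+n-1}{r+\ell}_q$. -/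

import Mathlib

/-- The `q`-integer `[n]_q = (1 - q^n)/(1 - q)`. -/
noncomputable def qint (q : ℝ) (n : ℕ) : ℝ := (1 - q ^ n) / (1 - q)

/-- The `q`-factorial `[n]_q! = [n]_q [n-1]_q ⋯ [1]_q`, with `[0]_q! = 1`. -/
noncomputable def qfact (q : ℝ) : ℕ → ℝ
  | 0 => 1
  | n + 1 => qint q (n + 1) * qfact q n

/-- The `q`-binomial coefficient `C(n,k)_q = [n]_q!/([k]_q! [n-k]_q!)`, equal to `0` for `k > n`. -/
noncomputable def qbinom (q : ℝ) (n k : ℕ) : ℝ :=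
  if k ≤ n then qfact q n / (qfact q k * qfact q (n - k)) else 0

/-- The `q`-hyperharmonic numbers: `H_n^{(0)}(q) = 1/(q [n]_q)` and
`H_n^{(r)}(q) = ∑_{j=1}^n q^j H_j^{(r-1)}(q)` for `r ≥ 1` (so `H_0^{(r)}(q) = 0`). -/
noncomputable def qhyp (q : ℝ) : ℕ → ℕ → ℝ
  | 0, n => 1 / (q * qint q n)
  | r + 1, n => ∑ j ∈ Finset.Icc 1 n, q ^ j * qhyp q r j

/-- The `q`-Stirling numbers of the second kind, defined by the recurrence
`S_q(n+1, m) = S_q(n, m-1) + [m]_q S_q(n, m)` with `S_q(n,0) = S_q(0,n) = δ_{n,0}`. -/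
noncomputable def qS2 (q : ℝ) : ℕ → ℕ → ℝ
  | 0, 0 => 1
  | 0, _ + 1 => 0
  | _ + 1, 0 => 0
  | n + 1, m + 1 => qS2 q n m + qint q (m + 1) * qS2 q n (m + 1)

/-- `A_q(p,r,n) = ∑_{ℓ=0}^p q^{C(ℓ,2)+ℓ-1} S_q(p,ℓ) [ℓ]_q! C(n+r-1, r-1)_q⁻¹ C(r+ℓ-1, ℓ)_q C(r+n, r+ℓ)_q`. -/
noncomputable def Aq (q : ℝ) (p r n : ℕ) : ℝ :=
  ∑ ℓ ∈ Finset.range (p + 1),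
    q ^ ((ℓ.choose 2 : ℤ) + (ℓ : ℤ) - 1) * qS2 q p ℓ * qfact q ℓ *
      (qbinom q (n + r - 1) (r - 1))⁻¹ * qbinom q (r + ℓ - 1) ℓ * qbinom q (r + n) (r + ℓ)

/-- `B_q(p,r,n) = ∑_{ℓ=0}^p (q^{C(ℓ,2)+r+2ℓ-2}/[r+ℓ]_q) S_q(p,ℓ) [ℓ]_q! C(r+ℓ-1, ℓ)_q C(r+n-1, r+ℓ)_q`. -/
noncomputable def Bq (q : ℝ) (p r n : ℕ) : ℝ :=
  ∑ ℓ ∈ Finset.range (p + 1),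
    q ^ ((ℓ.choose 2 : ℤ) + (r : ℤ) + 2 * (ℓ : ℤ) - 2) / qint q (r + ℓ) * qS2 q p ℓ * qfact q ℓ *
      qbinom q (r + ℓ - 1) ℓ * qbinom q (r + n - 1) (r + ℓ)


section lems
variable {q : ℝ}

lemma qint_pos (hq : 0 < q) (hq1 : q ≠ 1) {n : ℕ} (hn : 0 < n) : 0 < qint q n := by
  rcases lt_or_gt_of_ne hq1 with h | h
  · exact div_pos (by simpa using pow_lt_one₀ hq.le h hn.ne') (by linarith)
  · apply div_pos_of_neg_of_neg <;> nlinarith [one_lt_pow₀ h hn.ne']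

lemma qint_ne (hq : 0 < q) (hq1 : q ≠ 1) {n : ℕ} (hn : 0 < n) : qint q n ≠ 0 :=
  (qint_pos hq hq1 hn).ne'

lemma qfact_pos (hq : 0 < q) (hq1 : q ≠ 1) (n : ℕ) : 0 < qfact q n := by
  induction n with
  | zero => norm_num [qfact]
  | succ k ih => exact mul_pos (qint_pos hq hq1 k.succ_pos) ih

lemma qfact_ne (hq : 0 < q) (hq1 : q ≠ 1) (n : ℕ) : qfact q n ≠ 0 :=
  (qfact_pos hq hq1 n).ne'

lemma qint_zero : qint q 0 = 0 := by simp [qint]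

lemma qint_one (hq1 : q ≠ 1) : qint q 1 = 1 := by
  simp only [qint, pow_one]
  exact div_self (sub_ne_zero.2 (Ne.symm hq1))

lemma qint_add (hq1 : q ≠ 1) (a b : ℕ) : qint q (a + b) = qint q a + q ^ a * qint q b := by
  have h : (1:ℝ) - q ≠ 0 := sub_ne_zero.2 (Ne.symm hq1)
  simp only [qint, pow_add]
  field_simp
  ring

lemma qbinom_self (hq : 0 < q) (hq1 : q ≠ 1) (n : ℕ) : qbinom q n n = 1 := by
  simp [qbinom, qfact, qfact_ne hq hq1 n]

lemma qbinom_zero_right (hq : 0 < q) (hq1 : q ≠ 1) (n : ℕ) : qbinom q n 0 = 1 := by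
  simp [qbinom, qfact, qfact_ne hq hq1 n]

lemma qbinom_eq_zero {n k : ℕ} (h : n < k) : qbinom q n k = 0 := by
  simp [qbinom, Nat.not_le.2 h]

lemma qhyp_zero (r : ℕ) : qhyp q (r + 1) 0 = 0 := by simp [qhyp]

lemma qhyp_one (hq : 0 < q) (hq1 : q ≠ 1) (r : ℕ) : qhyp q r 1 = q ^ r / q := by
  induction r with
  | zero => simp [qhyp, qint_one hq1]
  | succ k ih => simp [qhyp, ih]; ring

lemma qhyp_succ (r n : ℕ) :
    qhyp q (r + 1) (n + 1) = qhyp q (r + 1) n + q ^ (n + 1) * qhyp q r (n + 1) := by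
  show ∑ j ∈ Finset.Icc 1 (n+1), q ^ j * qhyp q r j = _
  rw [← Finset.Ico_add_one_right_eq_Icc, Finset.sum_Ico_succ_top (by omega), Finset.Ico_add_one_right_eq_Icc]
  rfl

lemma qpascal (hq : 0 < q) (hq1 : q ≠ 1) (j k : ℕ) :
    qbinom q (j + k + 1) (k + 1) = qbinom q (j + k) (k + 1) + q ^ j * qbinom q (j + k) k := by
  rcases Nat.eq_zero_or_pos j with rfl | hj
  · simp [qbinom_self hq hq1, qbinom_eq_zero (Nat.lt_succ_self k)]
  obtain ⟨j', rfl⟩ := Nat.exists_eq_add_of_le hj; rw [add_comm 1 j'] at *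
  have e1 : qbinom q (j' + 1 + k + 1) (k + 1)
      = qfact q (j' + 1 + k + 1) / (qfact q (k+1) * qfact q (j' + 1)) := by
    rw [qbinom, if_pos (by omega), show j' + 1 + k + 1 - (k+1) = j' + 1 by omega]
  have e2 : qbinom q (j' + 1 + k) (k + 1)
      = qfact q (j' + k + 1) / (qfact q (k+1) * qfact q j') := by
    rw [qbinom, if_pos (by omega), show j' + 1 + k = j' + k + 1 by omega,
      show j' + k + 1 - (k + 1) = j' by omega]
  have e3 : qbinom q (j' + 1 + k) k = qfact q (j' + k + 1) / (qfact q k * qfact q (j' + 1)) := by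
    rw [qbinom, if_pos (by omega), show j' + 1 + k = j' + k + 1 by omega,
      show j' + k + 1 - k = j' + 1 by omega]
  rw [e1, e2, e3]
  have f1 : qfact q (j' + 1 + k + 1) = qint q (j' + k + 2) * qfact q (j' + k + 1) := by
    rw [show j' + 1 + k + 1 = (j' + k + 1) + 1 by omega]; rfl
  have f2 : qfact q (j' + 1) = qint q (j' + 1) * qfact q j' := rfl
  have f3 : qfact q (k + 1) = qint q (k + 1) * qfact q k := rfl
  have hadd : qint q (j' + k + 2) = qint q (j'+1) + q ^ (j'+1) * qint q (k+1) := by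
    rw [show j' + k + 2 = (j'+1) + (k+1) by omega, qint_add hq1]
  rw [f1, f2, f3, hadd]
  have h1 := qfact_ne hq hq1 (j'+k+1)
  have h2 := qfact_ne hq hq1 j'
  have h3 := qfact_ne hq hq1 k
  have h4 := qint_ne hq hq1 (n := j'+1) (by omega)
  have h5 := qint_ne hq hq1 (n := k+1) (by omega)
  field_simp

end lems

section l1
variable {q : ℝ}

lemma L1 (hq : 0 < q) (hq1 : q ≠ 1) (r : ℕ) : ∀ n' : ℕ,
    qint q (n' + r + 1) * (q ^ (n' + 1) * qhyp q r (n' + 1)) =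
      q ^ (n' + 1) * qint q r * qhyp q (r + 1) (n' + 1) +
        q ^ (n' + r) * qbinom q (n' + r) r := by
  induction r with
  | zero =>
    intro n'
    have h0 : qhyp q 0 (n' + 1) = 1 / (q * qint q (n' + 1)) := rfl
    rw [h0]
    simp only [Nat.add_zero, qint_zero, qbinom_zero_right hq hq1]
    have h1 := qint_ne hq hq1 (n := n' + 1) (by omega)
    field_simp
    ring
  | succ r ihr =>
    intro n'
    induction n' with
    | zero =>
      have h1 : qhyp q (r + 1) 1 = q ^ (r + 1) / q := qhyp_one hq hq1 (r + 1)
      have h2 : qhyp q (r + 2) 1 = q ^ (r + 2) / q := qhyp_one hq hq1 (r + 2)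
      simp only [zero_add, pow_one, h1, h2, qbinom_self hq hq1]
      simp only [qint]
      have hne : (1 : ℝ) - q ≠ 0 := sub_ne_zero.2 (Ne.symm hq1)
      field_simp
      ring
    | succ n' ihn =>
      have hR1 : qhyp q (r + 2) (n' + 2) =
          qhyp q (r + 2) (n' + 1) + q ^ (n' + 2) * qhyp q (r + 1) (n' + 2) :=
        qhyp_succ (r + 1) (n' + 1)
      have hR4 : qhyp q (r + 1) (n' + 2) =
          qhyp q (r + 1) (n' + 1) + q ^ (n' + 2) * qhyp q r (n' + 2) :=
        qhyp_succ r (n' + 1)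
      have hR2 := ihn
      have hR3 := ihr (n' + 1)
      have hP := qpascal hq hq1 (n' + 1) r
      rw [show n' + 1 + (r + 1) + 1 = n' + r + 3 by omega,
        show n' + 1 + (r + 1) = n' + r + 2 by omega] at *
      rw [show n' + (r + 1) + 1 = n' + r + 2 by omega,
        show n' + (r + 1) = n' + r + 1 by omega] at hR2
      rw [show n' + 1 + r + 1 = n' + r + 2 by omega,
        show n' + 1 + r = n' + r + 1 by omega] at hR3 hP
      simp only [qint] at hR2 hR3 ⊢
      linear_combination (-(q ^ (n' + 2)) * ((1 - q ^ (r + 1)) / (1 - q))) * hR1 +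
        q * hR2 + q ^ (n' + 2) * hR3 +
        (((1 - q ^ (n' + r + 2)) / (1 - q)) * q ^ (n' + 2)) * hR4 -
        (q * q ^ (n' + r + 1)) * hP

end l1


noncomputable def qff (q : ℝ) (n l : ℕ) : ℝ := qbinom q n l * qfact q l

section stirling
variable {q : ℝ}

lemma qff_zero (hq : 0 < q) (hq1 : q ≠ 1) (n : ℕ) : qff q n 0 = 1 := by
  simp [qff, qbinom_zero_right hq hq1, qfact]

lemma qff_step (hq : 0 < q) (hq1 : q ≠ 1) (n l : ℕ) :
    qint q n * qff q n l = q ^ l * qff q n (l + 1) + qint q l * qff q n l := by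
  rcases lt_trichotomy n l with h | rfl | h
  · simp [qff, qbinom_eq_zero h, qbinom_eq_zero (h.trans (Nat.lt_succ_self l))]
  · simp [qff, qbinom_eq_zero (Nat.lt_succ_self n)]
  · -- l < n : n = l + m + 1
    obtain ⟨m, rfl⟩ : ∃ m, n = l + m + 1 := ⟨n - l - 1, by omega⟩
    have e1 : qbinom q (l + m + 1) l = qfact q (l + m + 1) / (qfact q l * qfact q (m + 1)) := by
      rw [qbinom, if_pos (by omega), show l + m + 1 - l = m + 1 by omega]
    have e2 : qbinom q (l + m + 1) (l + 1) =
        qfact q (l + m + 1) / (qfact q (l + 1) * qfact q m) := by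
      rw [qbinom, if_pos (by omega), show l + m + 1 - (l + 1) = m by omega]
    have f1 : qfact q (m + 1) = qint q (m + 1) * qfact q m := rfl
    have f2 : qfact q (l + 1) = qint q (l + 1) * qfact q l := rfl
    have hadd : qint q (l + m + 1) = qint q l + q ^ l * qint q (m + 1) := by
      rw [show l + m + 1 = l + (m + 1) by omega, qint_add hq1]
    simp only [qff, e1, e2, f1, f2, hadd]
    have h1 := qfact_ne hq hq1 l
    have h2 := qfact_ne hq hq1 m
    have h3 := qfact_ne hq hq1 (l + m + 1)
    have h4 := qint_ne hq hq1 (n := m + 1) (by omega)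
    have h5 := qint_ne hq hq1 (n := l + 1) (by omega)
    field_simp
    ring

lemma qS2_big (q : ℝ) : ∀ p l : ℕ, p < l → qS2 q p l = 0 := by
  intro p
  induction p with
  | zero => intro l hl; obtain ⟨l', rfl⟩ : ∃ l', l = l' + 1 := ⟨l - 1, by omega⟩; rfl
  | succ p ih =>
    intro l hl
    obtain ⟨l', rfl⟩ : ∃ l', l = l' + 1 := ⟨l - 1, by omega⟩
    show qS2 q p l' + qint q (l' + 1) * qS2 q p (l' + 1) = 0
    rw [ih l' (by omega), ih (l' + 1) (by omega)]
    ring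

lemma qS2_zero_succ (q : ℝ) (p : ℕ) : qS2 q (p + 1) 0 = 0 := rfl

lemma qff_stirling (hq : 0 < q) (hq1 : q ≠ 1) (p : ℕ) : ∀ n : ℕ,
    (qint q n) ^ p = ∑ l ∈ Finset.range (p + 1),
      q ^ (l.choose 2) * qS2 q p l * qff q n l := by
  induction p with
  | zero =>
    intro n
    have : qS2 q 0 0 = 1 := rfl
    simp [this, qff_zero hq hq1]
  | succ p ih =>
    intro n
    have step : (qint q n) ^ (p + 1) = ∑ l ∈ Finset.range (p + 1),
        q ^ (l.choose 2) * qS2 q p l * (q ^ l * qff q n (l + 1) + qint q l * qff q n l) := by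
      rw [pow_succ, ih n, Finset.sum_mul]
      refine Finset.sum_congr rfl fun l _ => ?_
      rw [← qff_step hq hq1 n l]; ring
    rw [step]
    simp only [mul_add]
    rw [Finset.sum_add_distrib]
    -- RHS: peel off the l = 0 term
    rw [Finset.sum_range_succ' (fun m => q ^ (m.choose 2) * qS2 q (p + 1) m * qff q n m) (p + 1)]
    have hz : q ^ (Nat.choose 0 2) * qS2 q (p + 1) 0 * qff q n 0 = 0 := by
      rw [qS2_zero_succ]; ring
    rw [hz, add_zero]
    have hrec : ∀ i : ℕ, qS2 q (p + 1) (i + 1) = qS2 q p i + qint q (i + 1) * qS2 q p (i + 1) :=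
      fun i => rfl
    have hchoose : ∀ i : ℕ, (i + 1).choose 2 = i.choose 2 + i := by
      intro i
      rw [Nat.choose_two_right, Nat.choose_two_right, Nat.triangle_succ]
    have expand : ∑ i ∈ Finset.range (p + 1),
        q ^ ((i + 1).choose 2) * qS2 q (p + 1) (i + 1) * qff q n (i + 1)
        = (∑ i ∈ Finset.range (p + 1),
            q ^ (i.choose 2) * qS2 q p i * (q ^ i * qff q n (i + 1)))
          + ∑ i ∈ Finset.range (p + 1),
            q ^ ((i + 1).choose 2) * (qint q (i + 1) * qS2 q p (i + 1)) * qff q n (i + 1) := by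
      rw [← Finset.sum_add_distrib]
      refine Finset.sum_congr rfl fun i _ => ?_
      rw [hrec i, hchoose i, pow_add]
      ring
    rw [expand]
    congr 1
    -- second sums match
    rw [Finset.sum_range_succ (fun i => q ^ ((i + 1).choose 2) *
      (qint q (i + 1) * qS2 q p (i + 1)) * qff q n (i + 1)) p]
    have hz2 : q ^ ((p + 1).choose 2) * (qint q (p + 1) * qS2 q p (p + 1)) * qff q n (p + 1)
        = 0 := by
      rw [qS2_big q p (p + 1) (by omega)]; ring
    rw [hz2, add_zero]
    rw [Finset.sum_range_succ' (fun l => q ^ (l.choose 2) * qS2 q p l * (qint q l * qff q n l)) p]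
    have hz3 : q ^ (Nat.choose 0 2) * qS2 q p 0 * (qint q 0 * qff q n 0) = 0 := by
      rw [qint_zero]; ring
    rw [hz3, add_zero]
    refine Finset.sum_congr rfl fun i _ => ?_
    ring

end stirling

section sumA
variable {q : ℝ}

lemma one_sub_qpow_ne (hq : 0 < q) (hq1 : q ≠ 1) {k : ℕ} (hk : 0 < k) :
    (1 : ℝ) - q ^ k ≠ 0 := by
  rcases lt_or_gt_of_ne hq1 with h | h
  · have := pow_lt_one₀ hq.le h hk.ne'; intro hc; linarith
  · have := one_lt_pow₀ h hk.ne'; intro hc; linarith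

lemma hzpow (hq : 0 < q) (c l : ℕ) : q ^ ((c : ℤ) + (l : ℤ) - 1) = q ^ c * q ^ l / q := by
  rw [show (c : ℤ) + (l : ℤ) - 1 = ((c + l : ℕ) : ℤ) - (1 : ℤ) by push_cast; ring,
    zpow_sub₀ (ne_of_gt hq), zpow_natCast, zpow_one, pow_add]

set_option maxHeartbeats 1000000 in
lemma sumA (hq : 0 < q) (hq1 : q ≠ 1) (p r n : ℕ) (hr : 1 ≤ r) :
    qint q (n + r) * Aq q p r (n + 1) =
      qint q (n + 1) * Aq q p r n + q ^ n * (qint q (n + 1)) ^ p * qint q (n + r) := by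
  obtain ⟨r', rfl⟩ : ∃ r', r = r' + 1 := ⟨r - 1, by omega⟩
  rw [qff_stirling hq hq1 p (n + 1)]
  unfold Aq
  rw [Finset.mul_sum, Finset.mul_sum, Finset.mul_sum, Finset.sum_mul, ← Finset.sum_add_distrib]
  refine Finset.sum_congr rfl fun l _ => ?_
  rw [show n + 1 + (r' + 1) - 1 = n + r' + 1 by omega, show r' + 1 - 1 = r' by omega,
    show n + (r' + 1) - 1 = n + r' by omega, show r' + 1 + l - 1 = r' + l by omega,
    show n + (r' + 1) = n + r' + 1 by omega, show r' + 1 + (n + 1) = n + r' + 2 by omega,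
    show r' + 1 + n = n + r' + 1 by omega, show r' + 1 + l = r' + l + 1 by omega,
    hzpow hq]
  have hFne := qfact_ne hq hq1
  rcases Nat.lt_or_ge n l with hl | hl
  · rcases eq_or_lt_of_le (Nat.succ_le_of_lt hl) with hl1 | hl2
    · -- l = n + 1
      subst hl1
      simp only [Nat.succ_eq_add_one]
      rw [show r' + (n + 1) + 1 = n + r' + 2 by omega, qbinom_self hq hq1,
        qbinom_eq_zero (show n + r' + 1 < n + r' + 2 by omega)]
      have e1 : qbinom q (n + r' + 1) r' = qfact q (n + r' + 1) / (qfact q r' * qfact q (n + 1)) := by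
        rw [qbinom, if_pos (by omega), show n + r' + 1 - r' = n + 1 by omega]
      have e2 : qbinom q (r' + (n + 1)) (n + 1)
          = qfact q (n + r' + 1) / (qfact q (n + 1) * qfact q r') := by
        rw [qbinom, if_pos (by omega), show r' + (n + 1) = n + r' + 1 by omega,
          show n + r' + 1 - (n + 1) = r' by omega]
      have e3 : qff q (n + 1) (n + 1) = qfact q (n + 1) := by
        rw [qff, qbinom_self hq hq1, one_mul]
      rw [e1, e2, e3]
      have h1 := qint_ne hq hq1 (n := n + r' + 1) (by omega)
      field_simp [hFne (n + 1), hFne r', hFne (n + r' + 1), ne_of_gt hq]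
      ring
    · -- l ≥ n + 2 : everything vanishes
      rw [qbinom_eq_zero (show n + r' + 2 < r' + l + 1 by omega),
        qbinom_eq_zero (show n + r' + 1 < r' + l + 1 by omega)]
      have e3 : qff q (n + 1) l = 0 := by
        rw [qff, qbinom_eq_zero (by omega), zero_mul]
      rw [e3]
      ring
  · -- l ≤ n
    obtain ⟨m, rfl⟩ : ∃ m, n = l + m := ⟨n - l, by omega⟩
    have e1 : qbinom q (l + m + r' + 1) r'
        = qfact q (l + m + r' + 1) / (qfact q r' * qfact q (l + m + 1)) := by
      rw [qbinom, if_pos (by omega), show l + m + r' + 1 - r' = l + m + 1 by omega]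
    have e2 : qbinom q (l + m + r') r'
        = qfact q (l + m + r') / (qfact q r' * qfact q (l + m)) := by
      rw [qbinom, if_pos (by omega), show l + m + r' - r' = l + m by omega]
    have e3 : qbinom q (r' + l) l = qfact q (r' + l) / (qfact q l * qfact q r') := by
      rw [qbinom, if_pos (by omega), show r' + l - l = r' by omega]
    have e4 : qbinom q (l + m + r' + 2) (r' + l + 1)
        = qfact q (l + m + r' + 2) / (qfact q (r' + l + 1) * qfact q (m + 1)) := by
      rw [qbinom, if_pos (by omega), show l + m + r' + 2 - (r' + l + 1) = m + 1 by omega]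
    have e5 : qbinom q (l + m + r' + 1) (r' + l + 1)
        = qfact q (l + m + r' + 1) / (qfact q (r' + l + 1) * qfact q m) := by
      rw [qbinom, if_pos (by omega), show l + m + r' + 1 - (r' + l + 1) = m by omega]
    have e6 : qff q (l + m + 1) l
        = qfact q (l + m + 1) / (qfact q l * qfact q (m + 1)) * qfact q l := by
      rw [qff, qbinom, if_pos (by omega), show l + m + 1 - l = m + 1 by omega]
    rw [e1, e2, e3, e4, e5, e6]
    have f1 : qfact q (l + m + r' + 2) =
        qint q (l + m + r' + 2) * (qint q (l + m + r' + 1) * qfact q (l + m + r')) := rfl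
    have f2 : qfact q (l + m + r' + 1) = qint q (l + m + r' + 1) * qfact q (l + m + r') := rfl
    have f3 : qfact q (l + m + 1) = qint q (l + m + 1) * qfact q (l + m) := rfl
    have f4 : qfact q (m + 1) = qint q (m + 1) * qfact q m := rfl
    have f5 : qfact q (r' + l + 1) = qint q (r' + l + 1) * qfact q (r' + l) := rfl
    rw [f1, f2, f3, f4, f5]
    have hq0 : q ≠ 0 := ne_of_gt hq
    have hq2 : (1 : ℝ) - q ≠ 0 := sub_ne_zero.2 (Ne.symm hq1)
    have g1 := one_sub_qpow_ne hq hq1 (k := l + m + r' + 2) (by omega)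
    have g2 := one_sub_qpow_ne hq hq1 (k := l + m + r' + 1) (by omega)
    have g3 := one_sub_qpow_ne hq hq1 (k := l + m + 1) (by omega)
    have g4 := one_sub_qpow_ne hq hq1 (k := m + 1) (by omega)
    have g5 := one_sub_qpow_ne hq hq1 (k := r' + l + 1) (by omega)
    have nA := hFne (l + m + r'); have nB := hFne (l + m); have nC := hFne r'
    have nD := hFne l; have nE := hFne m; have nG := hFne (r' + l)
    generalize qfact q (l + m + r') = A at nA ⊢
    generalize qfact q (l + m) = B at nB ⊢
    generalize qfact q r' = C at nC ⊢
    generalize qfact q l = D at nD ⊢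
    generalize qfact q m = E at nE ⊢
    generalize qfact q (r' + l) = G at nG ⊢
    simp only [qint]
    field_simp
    ring

end sumA

section sumB
variable {q : ℝ}

set_option maxHeartbeats 1000000 in
lemma sumB (hq : 0 < q) (hq1 : q ≠ 1) (p r n : ℕ) (hr : 1 ≤ r) :
    qint q (n + r) * (Bq q p r (n + 1) - Bq q p r n) =
      Aq q p r n * (q ^ (n + r - 1) * qbinom q (n + r - 1) (r - 1)) := by
  obtain ⟨r', rfl⟩ : ∃ r', r = r' + 1 := ⟨r - 1, by omega⟩
  unfold Aq Bq
  rw [← Finset.sum_sub_distrib, Finset.mul_sum, Finset.sum_mul]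
  refine Finset.sum_congr rfl fun l _ => ?_
  have hq0 : q ≠ 0 := ne_of_gt hq
  have hzB : q ^ ((l.choose 2 : ℤ) + ((r' + 1 : ℕ) : ℤ) + 2 * (l : ℤ) - 2)
      = q ^ (l.choose 2 + r' + 2 * l) / q := by
    rw [show (l.choose 2 : ℤ) + ((r' + 1 : ℕ) : ℤ) + 2 * (l : ℤ) - 2
        = ((l.choose 2 + r' + 2 * l : ℕ) : ℤ) - 1 by push_cast; ring,
      zpow_sub₀ hq0, zpow_natCast, zpow_one]
  rw [show r' + 1 + l - 1 = r' + l by omega, show r' + 1 + (n + 1) - 1 = n + r' + 1 by omega,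
    show r' + 1 + n - 1 = n + r' by omega, show r' + 1 + l = r' + l + 1 by omega,
    show n + (r' + 1) - 1 = n + r' by omega, show n + (r' + 1) = n + r' + 1 by omega,
    show r' + 1 + n = n + r' + 1 by omega,
    show r' + 1 - 1 = r' by omega, hzB, hzpow hq]
  have hFne := qfact_ne hq hq1
  rcases Nat.lt_or_ge n (l + 1) with hl | hl
  · rcases eq_or_lt_of_le (Nat.succ_le_of_lt hl) with hl1 | hl2
    · -- l = n
      obtain rfl : l = n := by omega
      rw [show l + r' + 1 = r' + l + 1 by omega, show l + r' = r' + l by omega]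
      rw [qbinom_eq_zero (show r' + l < r' + l + 1 by omega), qbinom_self hq hq1]
      have e2 : qbinom q (r' + l) r' = qfact q (r' + l) / (qfact q r' * qfact q l) := by
        rw [qbinom, if_pos (by omega), show r' + l - r' = l by omega]
      have e3 : qbinom q (r' + l) l = qfact q (r' + l) / (qfact q l * qfact q r') := by
        rw [qbinom, if_pos (by omega), show r' + l - l = r' by omega]
      rw [e2, e3]
      have i1 := qint_ne hq hq1 (n := r' + l + 1) (by omega)
      field_simp [hFne (r' + l), hFne r', hFne l]
      ring
    · -- l ≥ n + 1 : all zero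
      rw [qbinom_eq_zero (show n + r' + 1 < r' + l + 1 by omega),
        qbinom_eq_zero (show n + r' < r' + l + 1 by omega)]
      ring
  · -- l + 1 ≤ n : n = l + m + 1
    obtain ⟨m, rfl⟩ : ∃ m, n = l + m + 1 := ⟨n - l - 1, by omega⟩
    rw [show l + m + 1 + r' + 1 = l + m + r' + 2 by omega,
      show l + m + 1 + r' = l + m + r' + 1 by omega]
    have e1 : qbinom q (l + m + r' + 2) (r' + l + 1)
        = qfact q (l + m + r' + 2) / (qfact q (r' + l + 1) * qfact q (m + 1)) := by
      rw [qbinom, if_pos (by omega), show l + m + r' + 2 - (r' + l + 1) = m + 1 by omega]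
    have e2 : qbinom q (l + m + r' + 1) (r' + l + 1)
        = qfact q (l + m + r' + 1) / (qfact q (r' + l + 1) * qfact q m) := by
      rw [qbinom, if_pos (by omega), show l + m + r' + 1 - (r' + l + 1) = m by omega]
    have e3 : qbinom q (r' + l) l = qfact q (r' + l) / (qfact q l * qfact q r') := by
      rw [qbinom, if_pos (by omega), show r' + l - l = r' by omega]
    have e4 : qbinom q (l + m + r' + 1) r'
        = qfact q (l + m + r' + 1) / (qfact q r' * qfact q (l + m + 1)) := by
      rw [qbinom, if_pos (by omega), show l + m + r' + 1 - r' = l + m + 1 by omega]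
    rw [e1, e2, e3, e4]
    have f1 : qfact q (l + m + r' + 2) =
        qint q (l + m + r' + 2) * (qint q (l + m + r' + 1) * qfact q (l + m + r')) := rfl
    have f2 : qfact q (l + m + r' + 1) = qint q (l + m + r' + 1) * qfact q (l + m + r') := rfl
    have f3 : qfact q (l + m + 1) = qint q (l + m + 1) * qfact q (l + m) := rfl
    have f4 : qfact q (m + 1) = qint q (m + 1) * qfact q m := rfl
    have f5 : qfact q (r' + l + 1) = qint q (r' + l + 1) * qfact q (r' + l) := rfl
    rw [f1, f2, f3, f4, f5]
    have hq2 : (1 : ℝ) - q ≠ 0 := sub_ne_zero.2 (Ne.symm hq1)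
    have g1 := one_sub_qpow_ne hq hq1 (k := l + m + r' + 2) (by omega)
    have g2 := one_sub_qpow_ne hq hq1 (k := l + m + r' + 1) (by omega)
    have g3 := one_sub_qpow_ne hq hq1 (k := l + m + 1) (by omega)
    have g4 := one_sub_qpow_ne hq hq1 (k := m + 1) (by omega)
    have g5 := one_sub_qpow_ne hq hq1 (k := r' + l + 1) (by omega)
    have nA := hFne (l + m + r'); have nB := hFne (l + m); have nC := hFne r'
    have nD := hFne l; have nE := hFne m; have nG := hFne (r' + l)
    generalize qfact q (l + m + r') = A at nA ⊢
    generalize qfact q (l + m) = B at nB ⊢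
    generalize qfact q r' = C at nC ⊢
    generalize qfact q l = D at nD ⊢
    generalize qfact q m = E at nE ⊢
    generalize qfact q (r' + l) = G at nG ⊢
    simp only [qint]
    field_simp
    ring

end sumB


section main
variable {q : ℝ}

lemma Bq_zero (p r' : ℕ) : Bq q p (r' + 1) 0 = 0 := by
  unfold Bq
  refine Finset.sum_eq_zero fun l _ => ?_
  rw [qbinom_eq_zero (show r' + 1 + 0 - 1 < r' + 1 + l by omega)]
  ring

lemma main_aux (hq : 0 < q) (hq1 : q ≠ 1) (p r'' : ℕ) : ∀ n : ℕ,
    ∑ ℓ ∈ Finset.Icc 1 n, q ^ (ℓ - 1) * (qint q ℓ) ^ p * qhyp q (r'' + 1) ℓ =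
      Aq q p (r'' + 1) n * qhyp q (r'' + 1) n - Bq q p (r'' + 1) n := by
  intro n
  induction n with
  | zero => simp [qhyp_zero, Bq_zero]
  | succ n ih =>
    rw [Finset.sum_Icc_succ_top (by omega), ih]
    simp only [Nat.add_sub_cancel]
    have hN := qint_ne hq hq1 (n := n + r'' + 1) (by omega)
    have hA := sumA hq hq1 p (r'' + 1) n (by omega)
    rw [show n + (r'' + 1) = n + r'' + 1 by omega] at hA
    have hB := sumB hq hq1 p (r'' + 1) n (by omega)
    rw [show n + (r'' + 1) = n + r'' + 1 by omega,
      show n + r'' + 1 - 1 = n + r'' by omega,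
      show r'' + 1 - 1 = r'' by omega] at hB
    have hL := L1 hq hq1 r'' n
    have hH := qhyp_succ (q := q) r'' n
    have hq_add := qint_add hq1 (n + 1) r''
    rw [show n + 1 + r'' = n + r'' + 1 by omega] at hq_add
    refine mul_left_cancel₀ hN ?_
    linear_combination (-(qint q (n + r'' + 1) * Aq q p (r'' + 1) n)) * hH -
      Aq q p (r'' + 1) n * hL + hB - qhyp q (r'' + 1) (n + 1) * hA +
      (Aq q p (r'' + 1) n * qhyp q (r'' + 1) (n + 1)) * hq_add

end main


/-- For `q > 0`, `q ≠ 1` and positive integers `n, r, p`,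
`∑_{ℓ=1}^n q^{ℓ-1} ([ℓ]_q)^p H_ℓ^{(r)}(q) = A_q(p,r,n) H_n^{(r)}(q) - B_q(p,r,n)`. -/
theorem sum_qpow_qint_pow_mul_qhyp (q : ℝ) (hq : 0 < q) (hq1 : q ≠ 1) (n r p : ℕ)
    (hn : 1 ≤ n) (hr : 1 ≤ r) (hp : 1 ≤ p) :
    ∑ ℓ ∈ Finset.Icc 1 n, q ^ (ℓ - 1) * (qint q ℓ) ^ p * qhyp q r ℓ =
      Aq q p r n * qhyp q r n - Bq q p r n := by
  obtain ⟨r'', rfl⟩ : ∃ r'', r = r'' + 1 := ⟨r - 1, by omega⟩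
  exact main_aux hq hq1 p r'' n
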